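/- Let 3 ≤ k ≤ m and u_1, u_2, …, u_k ∈ K_m with Tr_{2^m/2}(u_1·u_j) = 0 for all 2 ≤ j ≤ k, and let R : F_2^{k−1} → F_2 be any function. Define F : F_{2^n} → F_{2^n} by F(x) = x^{2^m+1} + u_1·x·R(Tr_{2^n/2}(u_2x), …, Tr_{2^n/2}(u_kx)), where the value of R is identified with 0 or 1 in F_{2^n}. Then for every β ∈ F_{2^n} with β ∉ K_m, the component function F_β is bent, and its Walsh transform satisfies W_{F_β}(ω) = 2^m·(−1)^{F*_β(ω)} for all ω ∈ F_{2^n}, where, with γ = β + β^{2^m}, G*_β(x) = Tr_{2^m/2}(γ^{−1}x^{2^m+1}) + 1, and F*_β(ω) = G*_β(ω) + D_{βu_1}G*_β(ω)·R(D_{u_2}G*_β(ω), …, D_{u_k}G*_β(ω)). -/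

import Mathlib

open scoped Classical BigOperators

noncomputable section

/-- The finite field with `2^k` elements. -/
abbrev GF (k : ℕ) := GaloisField 2 k

noncomputable instance (k : ℕ) : Fintype (GF k) := Fintype.ofFinite _

/-- The absolute trace `Tr_{2^k/2}`, viewed as an element of `GF k`
(its values lie in the prime field `{0,1}`). -/
def atr (k : ℕ) (x : GF k) : GF k := ∑ j ∈ Finset.range k, x ^ 2 ^ j

/-- `(-1)^b` for `b ∈ {0,1} ⊆ GF k`. -/
def chi (k : ℕ) (x : GF k) : ℤ := if x = 0 then 1 else -1

/-- The Walsh transform of a Boolean-valued function `f` on `GF k`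
(`f` takes values in the prime field `{0,1}`). -/
def walsh (k : ℕ) (f : GF k → GF k) (ω : GF k) : ℤ :=
  ∑ x : GF k, chi k (f x + atr k (ω * x))

/-- The trace `Tr_{2^m/2}` of the subfield `K_m ⊆ GF (2*m)`, viewed inside `GF (2*m)`. -/
def trKm (m : ℕ) (x : GF (2*m)) : GF (2*m) := ∑ j ∈ Finset.range m, x ^ 2 ^ j

/-- The subfield `K_m = {x : x^(2^m) = x}` of `GF (2*m)`, as a finset. -/
def Km (m : ℕ) : Finset (GF (2*m)) := Finset.univ.filter (fun x => x ^ 2 ^ m = x)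

/-- `max_{a ≠ 0, ω} |W_{F_a}(ω)|` for a vectorial function `F` on `GF (2*m)`. -/
def maxAbsW (m : ℕ) (F : GF (2*m) → GF (2*m)) : ℕ :=
  Finset.sup ((Finset.univ.filter (fun a : GF (2*m) => a ≠ 0)) ×ˢ (Finset.univ : Finset (GF (2*m))))
    (fun p => (walsh (2*m) (fun x => atr (2*m) (p.1 * F x)) p.2).natAbs)

/-- The nonlinearity `N_F = 2^(n-1) - (1/2) max_{a ≠ 0, ω} |W_{F_a}(ω)|`, `n = 2m`. -/
def nlin (m : ℕ) (F : GF (2*m) → GF (2*m)) : ℚ :=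
  2 ^ (2*m - 1) - (maxAbsW m F : ℚ) / 2


/-- The dual `G*_β(x) = Tr_{2^m/2}(γ⁻¹·x^(2^m+1)) + 1` of the Niho quadratic component,
with `γ = β + β^(2^m)`. -/
def nihoDual (m : ℕ) (γ : GF (2*m)) (x : GF (2*m)) : GF (2*m) :=
  trKm m (γ⁻¹ * x ^ (2 ^ m + 1)) + 1

namespace S7

open Finset

variable {N : ℕ}

def Is01 {N : ℕ} (x : GF N) : Prop := x = 0 ∨ x = 1

lemma two_zero : (2 : GF N) = 0 := by
  have := CharP.cast_eq_zero (GF N) 2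
  simpa using this

lemma add_self (x : GF N) : x + x = 0 := by
  have : x + x = 2 * x := by ring
  rw [this, two_zero, zero_mul]

lemma add_eq_zero_iff {x y : GF N} : x + y = 0 ↔ x = y := by
  constructor
  · intro h
    have h2 : (2 : GF N) = 0 := two_zero
    linear_combination h - y * h2
  · rintro rfl; exact add_self x

lemma chi_zero : chi N 0 = 1 := by simp [chi]

lemma chi_one : chi N 1 = -1 := by simp [chi]

lemma is01_add {a b : GF N} (ha : Is01 a) (hb : Is01 b) : Is01 (a + b) := by
  rcases ha with rfl | rfl <;> rcases hb with rfl | rfl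
  · simp [Is01]
  · simp [Is01]
  · simp [Is01]
  · left; exact add_self 1

lemma chi_add {a b : GF N} (ha : Is01 a) (hb : Is01 b) :
    chi N (a + b) = chi N a * chi N b := by
  rcases ha with rfl | rfl <;> rcases hb with rfl | rfl <;>
    simp [chi, add_self (1 : GF N)]

lemma chi_add_one {a : GF N} (ha : Is01 a) : chi N (a + 1) = - chi N a := by
  rw [chi_add ha (Or.inr rfl), chi_one]; ring

lemma is01_sum {ι : Type*} (s : Finset ι) (f : ι → GF N)
    (h : ∀ i ∈ s, Is01 (f i)) : Is01 (∑ i ∈ s, f i) := by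
  induction s using Finset.cons_induction with
  | empty => simp [Is01]
  | cons a s ha ih =>
      rw [Finset.sum_cons]
      exact is01_add (h a (Finset.mem_cons_self a s))
        (ih fun i hi => h i (Finset.mem_cons_of_mem hi))

lemma chi_sum {ι : Type*} (s : Finset ι) (f : ι → GF N)
    (h : ∀ i ∈ s, Is01 (f i)) :
    chi N (∑ i ∈ s, f i) = ∏ i ∈ s, chi N (f i) := by
  induction s using Finset.cons_induction with
  | empty => simp [chi_zero]
  | cons a s ha ih =>
      rw [Finset.sum_cons, Finset.prod_cons,
        chi_add (h a (Finset.mem_cons_self a s))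
          (is01_sum s f fun i hi => h i (Finset.mem_cons_of_mem hi)),
        ih fun i hi => h i (Finset.mem_cons_of_mem hi)]

lemma chi_mul_self (x : GF N) : chi N x * chi N x = 1 := by
  by_cases h : x = 0 <;> simp [chi, h]

/-- generic trace-sum -/
def trP (r : ℕ) {N : ℕ} (x : GF N) : GF N := ∑ j ∈ Finset.range r, x ^ 2 ^ j

lemma atr_eq_trP (k : ℕ) (x : GF k) : atr k x = trP k x := rfl

lemma trKm_eq_trP (m : ℕ) (x : GF (2*m)) : trKm m x = trP m x := rfl

lemma trP_add (r : ℕ) (x y : GF N) : trP r (x + y) = trP r x + trP r y := by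
  unfold trP
  rw [← Finset.sum_add_distrib]
  exact Finset.sum_congr rfl fun j _ => add_pow_char_pow x y 2 j

lemma trP_zero (r : ℕ) : trP r (0 : GF N) = 0 := by
  unfold trP
  exact Finset.sum_eq_zero fun j _ => zero_pow (by positivity : (0:ℕ) < 2 ^ j).ne'

lemma trP_smul01 (r : ℕ) {c : GF N} (hc : Is01 c) (x : GF N) :
    trP r (c * x) = c * trP r x := by
  rcases hc with rfl | rfl
  · simp [trP_zero]
  · simp

lemma trP_sum {ι : Type*} (r : ℕ) (s : Finset ι) (f : ι → GF N) :
    trP r (∑ i ∈ s, f i) = ∑ i ∈ s, trP r (f i) := by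
  induction s using Finset.cons_induction with
  | empty => simp [trP_zero]
  | cons a s ha ih => rw [Finset.sum_cons, Finset.sum_cons, trP_add, ih]

lemma trP_sq (r : ℕ) {x : GF N} (hx : x ^ 2 ^ r = x) :
    trP r (x ^ 2) = trP r x := by
  have h1 : ∀ j, (x ^ 2) ^ 2 ^ j = x ^ 2 ^ (j + 1) := by
    intro j; rw [← pow_mul, pow_succ, mul_comm (2^j) 2]
  have e1 : trP r (x ^ 2) + x ^ 2 ^ 0 = trP r x + x ^ 2 ^ r := by
    unfold trP
    calc (∑ j ∈ range r, (x^2) ^ 2 ^ j) + x ^ 2 ^ 0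
        = (∑ j ∈ range r, x ^ 2 ^ (j+1)) + x ^ 2 ^ 0 := by
          rw [Finset.sum_congr rfl fun j _ => h1 j]
      _ = ∑ j ∈ range (r+1), x ^ 2 ^ j := by
          rw [Finset.sum_range_succ' (fun j => x ^ 2 ^ j) r]
      _ = (∑ j ∈ range r, x ^ 2 ^ j) + x ^ 2 ^ r := Finset.sum_range_succ _ r
  have e2 : trP r (x ^ 2) + x = trP r x + x := by
    simpa [hx] using e1
  exact add_right_cancel e2

lemma sq_trP (r : ℕ) (x : GF N) : (trP r x) ^ 2 = trP r (x ^ 2) := by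
  unfold trP
  rw [CharTwo.sum_sq]
  refine Finset.sum_congr rfl fun j _ => ?_
  rw [← pow_mul, ← pow_mul, mul_comm]

lemma is01_of_sq (a : GF N) (h : a ^ 2 = a) : Is01 a := by
  have : a * (a + 1) = 0 := by
    have : a * (a + 1) = a ^ 2 + a := by ring
    rw [this, h, add_self]
  rcases mul_eq_zero.mp this with h0 | h1
  · exact Or.inl h0
  · exact Or.inr (add_eq_zero_iff.mp h1)

lemma is01_trP (r : ℕ) {x : GF N} (hx : x ^ 2 ^ r = x) : Is01 (trP r x) := by
  apply is01_of_sq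
  rw [sq_trP, trP_sq r hx]

end S7
namespace S7
open Finset Polynomial

variable {N : ℕ}

lemma card_GF {m : ℕ} (hm : 1 ≤ m) : Fintype.card (GF (2*m)) = 2 ^ (2*m) := by
  rw [← Nat.card_eq_fintype_card]
  exact GaloisField.card 2 (2*m) (by omega)

lemma pow_card_GF {m : ℕ} (hm : 1 ≤ m) (x : GF (2*m)) : x ^ 2 ^ (2*m) = x := by
  rw [← card_GF hm]; exact FiniteField.pow_card x

lemma pow_qq {m : ℕ} (hm : 1 ≤ m) (x : GF (2*m)) : (x ^ 2 ^ m) ^ 2 ^ m = x := by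
  rw [← pow_mul, ← pow_add, ← two_mul]; exact pow_card_GF hm x

/-- root-counting bound -/
lemma card_le_natDegree {F : Type*} [Field F] (s : Finset F) (p : F[X]) (hp : p ≠ 0)
    (h : ∀ x ∈ s, p.eval x = 0) : s.card ≤ p.natDegree := by
  have hsub : s ⊆ p.roots.toFinset := by
    intro x hx
    rw [Multiset.mem_toFinset, Polynomial.mem_roots hp]
    exact h x hx
  calc s.card ≤ p.roots.toFinset.card := Finset.card_le_card hsub
    _ ≤ Multiset.card p.roots := Multiset.toFinset_card_le _
    _ ≤ p.natDegree := p.card_roots'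

/-- the trace polynomial is nonzero somewhere on a big enough set -/
lemma exists_trP_ne_zero (r : ℕ) (hr : 1 ≤ r) (s : Finset (GF N))
    (hcard : 2 ^ (r-1) < s.card) : ∃ x ∈ s, trP r x ≠ 0 := by
  by_contra hcon
  push_neg at hcon
  set p : (GF N)[X] := ∑ j ∈ range r, X ^ 2 ^ j with hp
  have heval : ∀ x, p.eval x = trP r x := by
    intro x; rw [hp]; simp [trP, Polynomial.eval_finset_sum]
  have hpne : p ≠ 0 := by
    intro h0
    have : p.coeff 1 = 1 := by
      rw [hp]
      rw [Polynomial.finset_sum_coeff]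
      rw [Finset.sum_eq_single 0]
      · simp
      · intro j hj hj0
        rw [Polynomial.coeff_X_pow]
        have : 2 ^ j ≠ 1 := by
          have : 1 < 2 ^ j := Nat.one_lt_two_pow hj0
          omega
        simp only [ite_eq_right_iff]
        intro h; exact absurd h.symm this
      · intro h; exact absurd (Finset.mem_range.mpr (by omega)) h
    rw [h0] at this
    simp at this
  have hdeg : p.natDegree ≤ 2 ^ (r-1) := by
    apply Polynomial.natDegree_sum_le_of_forall_le
    intro j hj
    rw [Polynomial.natDegree_X_pow]
    exact Nat.pow_le_pow_right (by norm_num) (by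
      have := Finset.mem_range.mp hj; omega)
  have := card_le_natDegree s p hpne (fun x hx => by rw [heval]; exact hcon x hx)
  omega

end S7
namespace S7
open Finset Polynomial

lemma frobm_add {m : ℕ} (x y : GF (2*m)) :
    (x + y) ^ 2 ^ m = x ^ 2 ^ m + y ^ 2 ^ m := add_pow_char_pow x y 2 m

lemma Km_card {m : ℕ} (hm : 1 ≤ m) : (Km m).card = 2 ^ m := by
  classical
  set f : GF (2*m) → GF (2*m) := fun x => x ^ 2 ^ m + x with hf
  set F0 : Finset (GF (2*m)) := Finset.univ.filter (fun x => f x = 0) with hF0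
  have hKm : Km m = F0 := by
    ext x
    simp only [Km, hF0, Finset.mem_filter, Finset.mem_univ, true_and, hf]
    exact ⟨fun h => add_eq_zero_iff.mpr h, fun h => add_eq_zero_iff.mp h⟩
  have hff : ∀ x, f (f x) = 0 := by
    intro x
    show (x ^ 2 ^ m + x) ^ 2 ^ m + (x ^ 2 ^ m + x) = 0
    rw [frobm_add, pow_qq hm]
    exact add_eq_zero_iff.mpr (by ring)
  -- all fibers of f over its image have the same size
  have hfiber : ∀ b ∈ Finset.univ.image f,
      (Finset.univ.filter (fun x => f x = b)).card = F0.card := by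
    intro b hb
    obtain ⟨xb, _, hxb⟩ := Finset.mem_image.mp hb
    apply Finset.card_bij (fun x _ => x + xb)
    · intro a ha
      simp only [hF0, Finset.mem_filter, Finset.mem_univ, true_and] at ha ⊢
      show (a + xb) ^ 2 ^ m + (a + xb) = 0
      have : f a = b := ha
      rw [frobm_add]
      have hfa : a ^ 2 ^ m + a = b := this
      have hfxb : xb ^ 2 ^ m + xb = b := hxb
      have : (a + xb) ^ 2 ^ m + (a + xb) = (a ^ 2 ^ m + a) + (xb ^ 2 ^ m + xb) := by
        rw [frobm_add]; ring
      rw [frobm_add] at this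
      rw [this, hfa, hfxb, add_self]
    · intro a _ a' _ h
      have := congrArg (· + xb) h
      simpa [add_assoc, add_self] using this
    · intro c hc
      refine ⟨c + xb, ?_, by rw [add_assoc, add_self, add_zero]⟩
      simp only [Finset.mem_filter, Finset.mem_univ, true_and]
      have hc0 : f c = 0 := by
        simpa [hF0] using hc
      show (c + xb) ^ 2 ^ m + (c + xb) = b
      have : (c + xb) ^ 2 ^ m + (c + xb) = (c ^ 2 ^ m + c) + (xb ^ 2 ^ m + xb) := by
        rw [frobm_add]; ring
      rw [this]
      have : c ^ 2 ^ m + c = 0 := hc0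
      rw [this, zero_add]
      exact hxb
  have hcount : 2 ^ (2*m) = (Finset.univ.image f).card * F0.card := by
    have h1 := Finset.card_eq_sum_card_fiberwise
      (f := f) (s := (Finset.univ : Finset (GF (2*m)))) (t := Finset.univ.image f)
      (fun x _ => Finset.mem_image_of_mem f (Finset.mem_univ x))
    rw [Finset.card_univ, card_GF hm] at h1
    rw [h1, Finset.sum_congr rfl hfiber, Finset.sum_const, smul_eq_mul]
  have himsub : Finset.univ.image f ⊆ F0 := by
    intro b hb
    obtain ⟨x, _, hx⟩ := Finset.mem_image.mp hb
    simp only [hF0, Finset.mem_filter, Finset.mem_univ, true_and]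
    rw [← hx]; exact hff x
  have hle : F0.card ≤ 2 ^ m := by
    refine le_trans (card_le_natDegree F0 (X ^ 2 ^ m + X) ?_ ?_) ?_
    · intro h0
      have h2m : (1:ℕ) ≠ 2 ^ m := by
        have : 2 ≤ 2 ^ m := by
          calc 2 = 2^1 := (pow_one 2).symm
          _ ≤ 2 ^ m := Nat.pow_le_pow_right (by norm_num) hm
        omega
      have : (X ^ 2 ^ m + X : (GF (2*m))[X]).coeff 1 = 1 := by
        rw [Polynomial.coeff_add, Polynomial.coeff_X_pow, Polynomial.coeff_X_one,
          if_neg h2m, zero_add]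
      rw [h0] at this
      simp at this
    · intro x hx
      simp only [hF0, Finset.mem_filter] at hx
      have : x ^ 2 ^ m + x = 0 := hx.2
      simp [this]
    · calc (X ^ 2 ^ m + X : (GF (2*m))[X]).natDegree
          ≤ max (X ^ 2 ^ m : (GF (2*m))[X]).natDegree (X : (GF (2*m))[X]).natDegree :=
            Polynomial.natDegree_add_le _ _
        _ ≤ 2 ^ m := by
            rw [Polynomial.natDegree_X_pow, Polynomial.natDegree_X]
            have : 1 ≤ 2 ^ m := Nat.one_le_two_pow
            omega
  have hge : 2 ^ m ≤ F0.card := by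
    by_contra hlt
    push_neg at hlt
    have h2 : (Finset.univ.image f).card ≤ F0.card := Finset.card_le_card himsub
    have : (Finset.univ.image f).card * F0.card < 2 ^ m * 2 ^ m :=
      Nat.mul_lt_mul_of_le_of_lt (le_trans h2 (le_of_lt hlt)) hlt (by positivity)
    rw [← hcount] at this
    have : 2 ^ (2*m) = 2 ^ m * 2 ^ m := by rw [two_mul, pow_add]
    omega
  rw [hKm]
  omega

end S7
namespace S7
open Finset

variable {m : ℕ}

lemma mem_Km {x : GF (2*m)} : x ∈ Km m ↔ x ^ 2 ^ m = x := by
  simp [Km]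

lemma is01_atr (hm : 1 ≤ m) (x : GF (2*m)) : Is01 (atr (2*m) x) := by
  rw [atr_eq_trP]; exact is01_trP (2*m) (pow_card_GF hm x)

lemma is01_trKm {z : GF (2*m)} (hz : z ^ 2 ^ m = z) : Is01 (trKm m z) := by
  rw [trKm_eq_trP]; exact is01_trP m hz

lemma trP_sq_arg (hm : 1 ≤ m) (y : GF (2*m)) :
    trP (2*m) (y ^ 2) = trP (2*m) y :=
  trP_sq (2*m) (pow_card_GF hm y)

lemma atr_pow_pow (hm : 1 ≤ m) (s : ℕ) (y : GF (2*m)) :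
    trP (2*m) (y ^ 2 ^ s) = trP (2*m) y := by
  induction s with
  | zero => rw [pow_zero, pow_one]
  | succ s ih =>
      have : y ^ 2 ^ (s+1) = (y ^ 2 ^ s) ^ 2 := by
        rw [← pow_mul, pow_succ]
      rw [this, trP_sq_arg hm, ih]

lemma trP_split (w : GF (2*m)) :
    trP (2*m) w = trP m w + trP m (w ^ 2 ^ m) := by
  unfold trP
  rw [show Finset.range (2*m) = Finset.range (m+m) by rw [two_mul], Finset.sum_range_add]
  congr 1
  refine Finset.sum_congr rfl fun j _ => ?_
  rw [← pow_mul, ← pow_add]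

lemma atr_mul_Km (β : GF (2*m)) {z : GF (2*m)} (hz : z ^ 2 ^ m = z) :
    atr (2*m) (β * z) = trKm m ((β + β ^ 2 ^ m) * z) := by
  rw [atr_eq_trP, trKm_eq_trP, trP_split]
  rw [mul_pow, hz]
  rw [add_mul, trP_add]

lemma atr_Km {z : GF (2*m)} (hz : z ^ 2 ^ m = z) : atr (2*m) z = 0 := by
  have := atr_mul_Km 1 hz
  rw [one_mul, one_pow] at this
  rw [this]
  have : (1 : GF (2*m)) + 1 = 0 := add_self 1
  rw [this, zero_mul, trKm_eq_trP, trP_zero]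

lemma Km_char_sum (hm : 1 ≤ m) {γ : GF (2*m)} (hγ0 : γ ≠ 0) (hγ : γ ^ 2 ^ m = γ) :
    ∑ z ∈ Km m, chi (2*m) (trKm m (γ * z)) = 0 := by
  obtain ⟨z₀, hz₀mem, hz₀⟩ := exists_trP_ne_zero m hm (Km m)
    (by rw [Km_card hm]
        exact Nat.pow_lt_pow_right (by norm_num) (by omega))
  have hz₀Km : z₀ ^ 2 ^ m = z₀ := mem_Km.mp hz₀mem
  have htr1 : trKm m z₀ = 1 := by
    rcases is01_trKm hz₀Km with h | h
    · exact absurd (trKm_eq_trP m z₀ ▸ h) hz₀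
    · exact h
  set s₀ : GF (2*m) := γ⁻¹ * z₀ with hs₀
  have hs₀Km : s₀ ^ 2 ^ m = s₀ := by
    rw [hs₀, mul_pow, inv_pow, hγ, hz₀Km]
  set S := ∑ z ∈ Km m, chi (2*m) (trKm m (γ * z)) with hS
  have key : S = -S := by
    rw [hS]
    nth_rewrite 1 [show (Km m) = (Km m) by rfl]
    rw [← Finset.sum_neg_distrib]
    apply Finset.sum_nbij' (i := fun z => z + s₀) (j := fun z => z + s₀)
    · intro a ha
      rw [mem_Km] at ha ⊢
      rw [frobm_add, ha, hs₀Km]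
    · intro a ha
      rw [mem_Km] at ha ⊢
      rw [frobm_add, ha, hs₀Km]
    · intro a _; rw [add_assoc, add_self, add_zero]
    · intro a _; rw [add_assoc, add_self, add_zero]
    · intro z hz
      have hzKm := mem_Km.mp hz
      have h1 : γ * (z + s₀) = γ * z + z₀ := by
        rw [mul_add, hs₀, ← mul_assoc, mul_inv_cancel₀ hγ0, one_mul]
      have e : trKm m (γ * (z + s₀)) = trKm m (γ * z) + 1 := by
        rw [h1, trKm_eq_trP, trP_add, ← trKm_eq_trP, ← trKm_eq_trP, htr1]
      rw [e, chi_add_one (is01_trKm (by rw [mul_pow, hγ, hzKm]))]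
      ring
  omega

end S7
namespace S7
open Finset Polynomial

variable {m : ℕ}

lemma norm_Km (hm : 1 ≤ m) (x : GF (2*m)) :
    (x ^ (2 ^ m + 1)) ^ 2 ^ m = x ^ (2 ^ m + 1) := by
  rw [pow_succ x (2^m), mul_pow, pow_qq hm]
  exact mul_comm x (x ^ 2 ^ m)

lemma gamma_ne_zero {β : GF (2*m)} (hβ : β ^ 2 ^ m ≠ β) : β + β ^ 2 ^ m ≠ 0 := by
  intro h
  exact hβ (add_eq_zero_iff.mp h).symm

lemma gamma_Km (hm : 1 ≤ m) (β : GF (2*m)) :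
    (β + β ^ 2 ^ m) ^ 2 ^ m = β + β ^ 2 ^ m := by
  rw [frobm_add, pow_qq hm, add_comm]

lemma gauss (hm : 1 ≤ m) {β : GF (2*m)} (hβ : β ^ 2 ^ m ≠ β) :
    ∑ x : GF (2*m), chi (2*m) (atr (2*m) (β * x ^ (2 ^ m + 1))) = -(2^m : ℤ) := by
  classical
  set γ := β + β ^ 2 ^ m with hγ
  have hγ0 : γ ≠ 0 := gamma_ne_zero hβ
  have hγKm : γ ^ 2 ^ m = γ := gamma_Km hm β
  set g : GF (2*m) → GF (2*m) := fun x => x ^ (2 ^ m + 1) with hg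
  set f : GF (2*m) → ℤ := fun z => chi (2*m) (trKm m (γ * z)) with hf
  have hrw : ∀ x : GF (2*m), chi (2*m) (atr (2*m) (β * x ^ (2 ^ m + 1))) = f (g x) := by
    intro x
    rw [hf, hg]
    rw [atr_mul_Km β (norm_Km hm x)]
  rw [Finset.sum_congr rfl (fun x _ => hrw x)]
  -- split off zero
  rw [← Finset.add_sum_erase _ _ (Finset.mem_univ (0 : GF (2*m)))]
  have hg0 : f (g 0) = 1 := by
    rw [hg, hf]
    simp only
    rw [zero_pow (by positivity : (2:ℕ)^m + 1 ≠ 0), mul_zero, trKm_eq_trP, trP_zero, chi_zero]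
  rw [hg0]
  -- fiberwise sum
  set s : Finset (GF (2*m)) := Finset.univ.erase 0 with hs
  set t : Finset (GF (2*m)) := s.image g with ht
  have hmem : ∀ x ∈ s, g x ∈ t := fun x hx => Finset.mem_image_of_mem g hx
  set e : ℕ := (Finset.univ.filter (fun y : GF (2*m) => g y = 1)).card with he
  -- every fiber over the image has cardinality e
  have hfib : ∀ z ∈ t, (s.filter (fun x => g x = z)).card = e := by
    intro z hz
    obtain ⟨xz, hxzs, hxz⟩ := Finset.mem_image.mp hz
    have hxz0 : xz ≠ 0 := (Finset.mem_erase.mp hxzs).1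
    have hz0 : z ≠ 0 := by
      rw [← hxz, hg]; exact pow_ne_zero _ hxz0
    rw [he]
    apply Finset.card_bij (fun x _ => xz⁻¹ * x)
    · intro a ha
      obtain ⟨has, hag⟩ := Finset.mem_filter.mp ha
      refine Finset.mem_filter.mpr ⟨Finset.mem_univ _, ?_⟩
      show g (xz⁻¹ * a) = 1
      rw [hg]
      simp only
      rw [mul_pow, inv_pow]
      have : xz ^ (2^m+1) = z := hxz
      rw [this]
      have : a ^ (2^m+1) = z := hag
      rw [this, inv_mul_cancel₀ hz0]
    · intro a ha a' ha' hh
      exact mul_left_cancel₀ (inv_ne_zero hxz0) hh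
    · intro c hc
      obtain ⟨-, hcg⟩ := Finset.mem_filter.mp hc
      have hc0 : c ≠ 0 := by
        intro h0
        rw [h0, hg] at hcg
        simp only at hcg
        rw [zero_pow (by positivity : (2:ℕ)^m + 1 ≠ 0)] at hcg
        exact one_ne_zero hcg.symm
      refine ⟨xz * c, ?_, by rw [← mul_assoc, inv_mul_cancel₀ hxz0, one_mul]⟩
      refine Finset.mem_filter.mpr ⟨Finset.mem_erase.mpr ⟨mul_ne_zero hxz0 hc0, Finset.mem_univ _⟩, ?_⟩
      show g (xz * c) = z
      rw [hg]; simp only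
      rw [mul_pow]
      have h1 : xz ^ (2^m+1) = z := hxz
      have h2 : c ^ (2^m+1) = 1 := hcg
      rw [h1, h2, mul_one]
  have hcount : s.card = t.card * e := by
    rw [Finset.card_eq_sum_card_fiberwise hmem, Finset.sum_congr rfl hfib,
      Finset.sum_const, smul_eq_mul]
  have hscard : s.card = 2 ^ (2*m) - 1 := by
    rw [hs, Finset.card_erase_of_mem (Finset.mem_univ _), Finset.card_univ, card_GF hm]
  -- t ⊆ Km \ {0}
  have htsub : t ⊆ (Km m).erase 0 := by
    intro z hz
    obtain ⟨x, hxs, hxz⟩ := Finset.mem_image.mp hz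
    have hx0 : x ≠ 0 := (Finset.mem_erase.mp hxs).1
    refine Finset.mem_erase.mpr ⟨?_, mem_Km.mpr ?_⟩
    · rw [← hxz, hg]; exact pow_ne_zero _ hx0
    · rw [← hxz]; exact norm_Km hm x
  have hKe : ((Km m).erase 0).card = 2 ^ m - 1 := by
    rw [Finset.card_erase_of_mem (mem_Km.mpr (by
      rw [zero_pow (by positivity : (2:ℕ)^m ≠ 0)])), Km_card hm]
  have htle : t.card ≤ 2 ^ m - 1 := hKe ▸ Finset.card_le_card htsub
  have hele : e ≤ 2 ^ m + 1 := by
    rw [he]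
    refine le_trans (card_le_natDegree _ (X ^ (2^m+1) - 1) ?_ ?_) ?_
    · intro h0
      have : (X ^ (2^m+1) - 1 : (GF (2*m))[X]).coeff 0 = -1 := by
        rw [Polynomial.coeff_sub, Polynomial.coeff_X_pow, Polynomial.coeff_one]
        norm_num
      rw [h0] at this
      simp at this
    · intro y hy
      have : g y = 1 := (Finset.mem_filter.mp hy).2
      rw [Polynomial.eval_sub, Polynomial.eval_pow, Polynomial.eval_X, Polynomial.eval_one]
      rw [sub_eq_zero]
      exact this
    · calc (X ^ (2^m+1) - 1 : (GF (2*m))[X]).natDegree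
          ≤ max (X ^ (2^m+1) : (GF (2*m))[X]).natDegree (1 : (GF (2*m))[X]).natDegree :=
            Polynomial.natDegree_sub_le _ _
        _ ≤ 2^m + 1 := by
            rw [Polynomial.natDegree_X_pow, Polynomial.natDegree_one]
            simp
  -- arithmetic: t.card = 2^m - 1 and e = 2^m + 1
  have hQ2 : 2 ≤ 2 ^ m := by
    calc 2 = 2^1 := (pow_one 2).symm
    _ ≤ 2 ^ m := Nat.pow_le_pow_right (by norm_num) hm
  have hQQ : 2 ^ (2*m) = 2^m * 2^m := by rw [two_mul, pow_add]
  have hcount' : (t.card : ℤ) * e + 1 = (2^m : ℤ) * 2^m := by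
    have h1 : 1 ≤ 2^(2*m) := Nat.one_le_two_pow
    have hN : t.card * e + 1 = 2^m * 2^m := by
      calc t.card * e + 1 = s.card + 1 := by rw [hcount]
      _ = 2^(2*m) - 1 + 1 := by rw [hscard]
      _ = 2^(2*m) := Nat.sub_add_cancel h1
      _ = 2^m * 2^m := hQQ
    exact_mod_cast congrArg (Nat.cast : ℕ → ℤ) hN
  have hts : t.card + 1 ≤ 2 ^ m := by omega
  have htsZ : (t.card : ℤ) + 1 ≤ 2^m := by exact_mod_cast hts
  have heleZ : (e : ℤ) ≤ 2^m + 1 := by exact_mod_cast hele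
  have hQ2Z : (2:ℤ) ≤ 2^m := by exact_mod_cast hQ2
  have hT0 : (0:ℤ) ≤ (t.card : ℤ) := Int.natCast_nonneg _
  have hE0 : (0:ℤ) ≤ (e : ℤ) := Int.natCast_nonneg _
  have hTeq : (t.card : ℤ) = 2^m - 1 := by
    nlinarith [mul_le_mul_of_nonneg_left heleZ hT0]
  have heeq : (e : ℤ) = 2^m + 1 := by
    have hne : (2^m : ℤ) - 1 ≠ 0 := by intro h; linarith
    apply mul_left_cancel₀ hne
    linear_combination hcount' - (e:ℤ) * hTeq
  have himeq : t = (Km m).erase 0 := by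
    apply Finset.eq_of_subset_of_card_le htsub
    have htN : t.card + 1 = 2^m := by
      exact_mod_cast (by linarith : ((t.card : ℤ) + 1 = 2^m))
    omega
  -- final evaluation
  have hsumKm : ∑ z ∈ (Km m).erase 0, f z = -1 := by
    have h0Km : (0 : GF (2*m)) ∈ Km m := mem_Km.mpr (by
      rw [zero_pow (by positivity : (2:ℕ)^m ≠ 0)])
    have := Finset.add_sum_erase _ f h0Km
    have hf0 : f 0 = 1 := by
      rw [hf]; simp only
      rw [mul_zero, trKm_eq_trP, trP_zero, chi_zero]
    have hful : ∑ z ∈ Km m, f z = 0 := Km_char_sum hm hγ0 hγKm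
    omega
  rw [Finset.sum_comp f g]
  have : ∑ z ∈ t, (s.filter (fun x => g x = z)).card • f z
      = ∑ z ∈ t, ((2^m : ℤ) + 1) * f z := by
    refine Finset.sum_congr rfl fun z hz => ?_
    rw [hfib z hz, nsmul_eq_mul, heeq]
  rw [this, ← Finset.mul_sum, himeq, hsumKm]
  ring
end S7
namespace S7
open Finset

variable {m : ℕ}

lemma walshG (hm : 1 ≤ m) {β : GF (2*m)} (hβ : β ^ 2 ^ m ≠ β) (v : GF (2*m)) :
    ∑ x : GF (2*m), chi (2*m) (atr (2*m) (β * x ^ (2 ^ m + 1)) + atr (2*m) (v * x))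
      = 2^m * chi (2*m) (nihoDual m (β + β ^ 2 ^ m) v) := by
  classical
  set γ := β + β ^ 2 ^ m with hγ
  have hγ0 : γ ≠ 0 := gamma_ne_zero hβ
  have hγKm : γ ^ 2 ^ m = γ := gamma_Km hm β
  have hγiKm : (γ⁻¹) ^ 2 ^ m = γ⁻¹ := by rw [inv_pow, hγKm]
  set c : GF (2*m) := v ^ 2 ^ m * γ⁻¹ with hc
  have hcq : c ^ 2 ^ m = v * γ⁻¹ := by rw [hc, mul_pow, pow_qq hm, hγiKm]
  set t : GF (2*m) := trKm m (γ⁻¹ * v ^ (2 ^ m + 1)) with htdef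
  have hvKm : (γ⁻¹ * v ^ (2 ^ m + 1)) ^ 2 ^ m = γ⁻¹ * v ^ (2 ^ m + 1) := by
    rw [mul_pow, hγiKm, norm_Km hm]
  have hIs01t : Is01 t := is01_trKm hvKm
  -- pointwise identity after substituting x = y + c
  have key : ∀ y : GF (2*m),
      atr (2*m) (β * (y + c) ^ (2 ^ m + 1)) + atr (2*m) (v * (y + c))
        = atr (2*m) (β * y ^ (2 ^ m + 1)) + t := by
    intro y
    have hexp : β * (y + c) ^ (2 ^ m + 1)
        = β * y ^ (2 ^ m + 1) + β * (y ^ 2 ^ m * c) + β * (c ^ 2 ^ m * y)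
          + β * (c ^ 2 ^ m * c) := by
      rw [pow_succ (y + c) (2 ^ m), frobm_add]
      ring
    rw [atr_eq_trP, atr_eq_trP, atr_eq_trP, hexp, trP_add, trP_add, trP_add]
    -- the cross term: Frobenius-shift it
    have hcross : trP (2*m) (β * (y ^ 2 ^ m * c)) = trP (2*m) (β ^ 2 ^ m * (y * c ^ 2 ^ m)) := by
      rw [← atr_pow_pow hm m (β * (y ^ 2 ^ m * c))]
      congr 1
      rw [mul_pow, mul_pow, pow_qq hm y]
    rw [hcross]
    have hlin : trP (2*m) (β ^ 2 ^ m * (y * c ^ 2 ^ m)) + trP (2*m) (β * (c ^ 2 ^ m * y))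
        = trP (2*m) (v * y) := by
      rw [← trP_add]
      congr 1
      have h1 : β ^ 2 ^ m * (y * c ^ 2 ^ m) + β * (c ^ 2 ^ m * y) = (γ * c ^ 2 ^ m) * y := by
        rw [hγ]; ring
      have h2 : γ * c ^ 2 ^ m = v := by
        rw [hcq, mul_comm v, ← mul_assoc, mul_inv_cancel₀ hγ0, one_mul]
      rw [h1, h2]
    have hconst : trP (2*m) (β * (c ^ 2 ^ m * c)) = t := by
      have hz : c ^ 2 ^ m * c = v ^ (2 ^ m + 1) * (γ⁻¹ * γ⁻¹) := by
        rw [hcq, hc]; ring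
      have hzKm : (v ^ (2 ^ m + 1) * (γ⁻¹ * γ⁻¹)) ^ 2 ^ m = v ^ (2 ^ m + 1) * (γ⁻¹ * γ⁻¹) := by
        rw [mul_pow, norm_Km hm, mul_pow, hγiKm]
      rw [hz, ← atr_eq_trP, atr_mul_Km β hzKm, ← hγ, htdef]
      congr 1
      field_simp
    have hvc : trP (2*m) (v * c) = 0 := by
      have h1 : v * c = v ^ (2 ^ m + 1) * γ⁻¹ := by rw [hc]; ring
      have h2 : (v ^ (2 ^ m + 1) * γ⁻¹) ^ 2 ^ m = v ^ (2 ^ m + 1) * γ⁻¹ := by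
        rw [mul_pow, norm_Km hm, hγiKm]
      rw [h1, ← atr_eq_trP, atr_Km h2]
    have hmul : trP (2*m) (v * (y + c)) = trP (2*m) (v * y) + trP (2*m) (v * c) := by
      rw [mul_add, trP_add]
    rw [hmul, hconst, hvc]
    have h2 := add_self (trP (2*m) (v * y))
    linear_combination hlin + h2
  -- substitution
  have hsub : ∑ x : GF (2*m), chi (2*m) (atr (2*m) (β * x ^ (2 ^ m + 1)) + atr (2*m) (v * x))
      = ∑ y : GF (2*m), chi (2*m) (atr (2*m) (β * (y + c) ^ (2 ^ m + 1)) + atr (2*m) (v * (y + c))) := by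
    exact (Fintype.sum_equiv (Equiv.addRight c)
      (fun y => chi (2*m) (atr (2*m) (β * (y + c) ^ (2 ^ m + 1)) + atr (2*m) (v * (y + c))))
      (fun x => chi (2*m) (atr (2*m) (β * x ^ (2 ^ m + 1)) + atr (2*m) (v * x)))
      (fun y => rfl)).symm
  rw [hsub]
  have : ∀ y : GF (2*m),
      chi (2*m) (atr (2*m) (β * (y + c) ^ (2 ^ m + 1)) + atr (2*m) (v * (y + c)))
        = chi (2*m) (atr (2*m) (β * y ^ (2 ^ m + 1))) * chi (2*m) t := by
    intro y
    rw [key y, chi_add (is01_atr hm _) hIs01t]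
  rw [Finset.sum_congr rfl (fun y _ => this y), ← Finset.sum_mul, gauss hm hβ]
  show -(2^m : ℤ) * chi (2*m) t = 2^m * chi (2*m) (nihoDual m γ v)
  have : nihoDual m γ v = t + 1 := rfl
  rw [this]
  rcases hIs01t with h | h <;> rw [h]
  · rw [chi_zero, zero_add, chi_one]; ring
  · rw [chi_one]
    rw [show (1:GF (2*m)) + 1 = 0 from add_self 1, chi_zero]
    ring
end S7
namespace S7
open Finset

variable {m N : ℕ}

/-- second-order difference kernel of the dual -/
def EE (m : ℕ) (γ a b : GF (2*m)) : GF (2*m) :=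
  trKm m (γ⁻¹ * (b * a ^ 2 ^ m + b ^ 2 ^ m * a + b ^ 2 ^ m * b))

lemma nihoDual_add (γ a b : GF (2*m)) :
    nihoDual m γ (a + b) = nihoDual m γ a + EE m γ a b := by
  unfold nihoDual EE
  have hexp : γ⁻¹ * (a + b) ^ (2 ^ m + 1)
      = γ⁻¹ * a ^ (2 ^ m + 1) + γ⁻¹ * (b * a ^ 2 ^ m + b ^ 2 ^ m * a + b ^ 2 ^ m * b) := by
    rw [pow_succ (a + b) (2 ^ m), frobm_add]
    ring
  rw [hexp, trKm_eq_trP, trP_add, ← trKm_eq_trP, ← trKm_eq_trP]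
  ring

lemma EE_cancel (γ a b : GF (2*m)) :
    nihoDual m γ (a + b) + nihoDual m γ a = EE m γ a b := by
  rw [nihoDual_add]
  linear_combination add_self (nihoDual m γ a)

lemma is01_nihoDual (hm : 1 ≤ m) {γ : GF (2*m)} (hγ : γ ^ 2 ^ m = γ) (x : GF (2*m)) :
    Is01 (nihoDual m γ x) := by
  unfold nihoDual
  refine is01_add (is01_trKm ?_) (Or.inr rfl)
  rw [mul_pow, inv_pow, hγ, norm_Km hm]

lemma is01_EE (hm : 1 ≤ m) {γ : GF (2*m)} (hγ : γ ^ 2 ^ m = γ) (a b : GF (2*m)) :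
    Is01 (EE m γ a b) := by
  rw [← EE_cancel]
  exact is01_add (is01_nihoDual hm hγ _) (is01_nihoDual hm hγ _)

lemma EE_add_right (γ a : GF (2*m)) {b b' : GF (2*m)}
    (hb : b ^ 2 ^ m = b) (hb' : b' ^ 2 ^ m = b') :
    EE m γ a (b + b') = EE m γ a b + EE m γ a b' := by
  unfold EE
  rw [frobm_add, hb, hb', trKm_eq_trP, trKm_eq_trP, trKm_eq_trP, ← trP_add]
  congr 1
  have h2 : (2 : GF (2*m)) = 0 := two_zero
  linear_combination γ⁻¹ * b * b' * h2

lemma EE_zero_right (γ a : GF (2*m)) : EE m γ a 0 = 0 := by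
  unfold EE
  rw [zero_pow (by positivity : (2:ℕ)^m ≠ 0)]
  rw [trKm_eq_trP]
  simp [trP_zero]

lemma EE_smul01 (γ a : GF (2*m)) {c : GF (2*m)} (hc : Is01 c) (b : GF (2*m)) :
    EE m γ a (c * b) = c * EE m γ a b := by
  rcases hc with rfl | rfl
  · rw [zero_mul, zero_mul, EE_zero_right]
  · rw [one_mul, one_mul]

lemma sum_Km {ι : Type*} (s : Finset ι) (U : ι → GF (2*m))
    (hU : ∀ i ∈ s, (U i) ^ 2 ^ m = U i) : (∑ i ∈ s, U i) ^ 2 ^ m = ∑ i ∈ s, U i := by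
  induction s using Finset.cons_induction with
  | empty => simp
  | cons a s ha ih =>
      rw [Finset.sum_cons, frobm_add, hU a (Finset.mem_cons_self a s),
        ih fun i hi => hU i (Finset.mem_cons_of_mem hi)]

lemma EE_sum {ι : Type*} (γ a : GF (2*m)) (s : Finset ι) (U : ι → GF (2*m))
    (hU : ∀ i ∈ s, (U i) ^ 2 ^ m = U i) :
    EE m γ a (∑ i ∈ s, U i) = ∑ i ∈ s, EE m γ a (U i) := by
  induction s using Finset.cons_induction with
  | empty => simp [EE_zero_right]
  | cons i s hi ih =>
      rw [Finset.sum_cons, Finset.sum_cons,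
        EE_add_right γ a (hU i (Finset.mem_cons_self i s))
          (sum_Km s U fun i hi => hU i (Finset.mem_cons_of_mem hi)),
        ih fun i hi => hU i (Finset.mem_cons_of_mem hi)]

lemma EE_shift (γ a b w : GF (2*m)) :
    EE m γ (a + w) b = EE m γ a b + trKm m (γ⁻¹ * (b * w ^ 2 ^ m + b ^ 2 ^ m * w)) := by
  unfold EE
  rw [frobm_add, trKm_eq_trP, trKm_eq_trP, trKm_eq_trP, ← trP_add]
  congr 1
  ring

/-- boolean to field -/
def bt {N : ℕ} (b : Bool) : GF N := if b then 1 else 0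

lemma is01_bt (b : Bool) : Is01 (bt (N := N) b) := by
  cases b <;> simp [bt, Is01]

lemma is01_bt_mul {v : GF N} (b : Bool) (hv : Is01 v) : Is01 (bt b * v) := by
  cases b
  · exact Or.inl (by simp [bt])
  · simpa [bt] using hv

lemma orth (r : ℕ) (v : Fin r → GF N) (hv : ∀ j, Is01 (v j)) :
    ∑ c : Fin r → Bool, chi N (∑ j, bt (c j) * v j)
      = if (∀ j, v j = 0) then ((2:ℤ)^r) else 0 := by
  classical
  have h1 : ∀ c : Fin r → Bool,
      chi N (∑ j, bt (c j) * v j) = ∏ j, chi N (bt (c j) * v j) :=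
    fun c => chi_sum univ _ (fun j _ => is01_bt_mul (c j) (hv j))
  rw [Finset.sum_congr rfl (fun c _ => h1 c)]
  have h2 : ∑ c : Fin r → Bool, ∏ j, chi N (bt (c j) * v j)
      = ∏ j, ∑ b : Bool, chi N (bt b * v j) := by
    rw [Finset.prod_univ_sum, Fintype.piFinset_univ]
  rw [h2]
  have h3 : ∀ j, ∑ b : Bool, chi N (bt b * v j) = 1 + chi N (v j) := by
    intro j
    rw [Fintype.sum_bool]
    have ht : bt (N := N) true = 1 := rfl
    have hf : bt (N := N) false = 0 := rfl
    rw [ht, hf, one_mul, zero_mul, chi_zero, add_comm]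
  rw [Finset.prod_congr rfl (fun j _ => h3 j)]
  by_cases hall : ∀ j, v j = 0
  · rw [if_pos hall]
    have : ∀ j ∈ (univ : Finset (Fin r)), 1 + chi N (v j) = 2 := by
      intro j _; rw [hall j, chi_zero]; norm_num
    rw [Finset.prod_congr rfl this, Finset.prod_const, Finset.card_univ, Fintype.card_fin]
  · rw [if_neg hall]
    push_neg at hall
    obtain ⟨j₀, hj₀⟩ := hall
    apply Finset.prod_eq_zero (Finset.mem_univ j₀)
    rcases hv j₀ with h | h
    · exact absurd h hj₀
    · rw [h, chi_one]; norm_num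

lemma pick (r : ℕ) (w : Fin r → GF N) (hw : ∀ j, Is01 (w j)) (H : (Fin r → GF N) → ℤ) :
    ∑ τ : Fin r → Bool,
      (if (∀ j, w j + bt (τ j) = 0) then ((2:ℤ)^r) else 0) * H (fun j => bt (τ j))
      = 2^r * H w := by
  classical
  set τ₀ : Fin r → Bool := fun j => decide (w j = 1) with hτ₀
  have hbtw : (fun j => bt (N := N) (τ₀ j)) = w := by
    funext j
    rcases hw j with h | h
    · have : τ₀ j = false := by rw [hτ₀]; simp [h]
      rw [this, h]; rfl
    · have : τ₀ j = true := by rw [hτ₀]; simp [h]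
      rw [this, h]; rfl
  rw [Finset.sum_eq_single τ₀]
  · rw [if_pos, hbtw]
    intro j
    rw [show bt (N := N) (τ₀ j) = w j from congrFun hbtw j]
    exact add_self (w j)
  · intro τ _ hτ
    rw [if_neg, zero_mul]
    intro hc
    apply hτ
    funext j
    have hbt : bt (N := N) (τ j) = w j := add_eq_zero_iff.mp (by
      have := hc j
      linear_combination this)
    rcases hw j with h | h
    · have : bt (N := N) (τ j) = 0 := by rw [hbt, h]
      have hτj : τ j = false := by
        cases hτj : τ j
        · rfl
        · rw [hτj] at this
          exact absurd this one_ne_zero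
      rw [hτj, hτ₀]; simp [h]
    · have : bt (N := N) (τ j) = 1 := by rw [hbt, h]
      have hτj : τ j = true := by
        cases hτj : τ j
        · rw [hτj] at this
          exact absurd this.symm one_ne_zero
        · rfl
      rw [hτj, hτ₀]; simp [h]
  · intro h; exact absurd (Finset.mem_univ τ₀) h
end S7

open S7 Finset

/-- `F(x) = x^(2^m+1) + u₁·x·R(Tr(u₂x), …, Tr(u_kx))` has all its
components `F_β`, `β ∉ K_m`, bent, with
`W_{F_β}(ω) = 2^m·(−1)^(F*_β(ω))` and the stated dual. -/
theorem stmt7 (m k : ℕ) (hm : 1 ≤ m) (hk3 : 3 ≤ k) (hkm : k ≤ m)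
    (u : ℕ → GF (2*m))
    (huK : ∀ i, 1 ≤ i → i ≤ k → (u i) ^ 2 ^ m = u i)
    (hortho : ∀ j, 2 ≤ j → j ≤ k → trKm m (u 1 * u j) = 0)
    (R : (Fin (k-1) → GF (2*m)) → GF (2*m)) (hR : ∀ v, R v = 0 ∨ R v = 1)
    (F : GF (2*m) → GF (2*m))
    (hF : ∀ x, F x = x ^ (2 ^ m + 1)
        + u 1 * x * R (fun j => atr (2*m) (u (j.1 + 2) * x)))
    (β : GF (2*m)) (hβ : β ^ 2 ^ m ≠ β) :
    (∀ ω, (walsh (2*m) (fun x => atr (2*m) (β * F x)) ω) ^ 2 = 2 ^ (2*m)) ∧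
    (∀ ω, walsh (2*m) (fun x => atr (2*m) (β * F x)) ω
      = 2 ^ m * chi (2*m)
          (nihoDual m (β + β ^ 2 ^ m) ω
            + (nihoDual m (β + β ^ 2 ^ m) (ω + β * u 1) + nihoDual m (β + β ^ 2 ^ m) ω)
              * R (fun j =>
                  nihoDual m (β + β ^ 2 ^ m) (ω + u (j.1 + 2))
                    + nihoDual m (β + β ^ 2 ^ m) ω))) := by
  classical
  set γ : GF (2*m) := β + β ^ 2 ^ m with hγdef
  have hγ0 : γ ≠ 0 := gamma_ne_zero hβ
  have hγKm : γ ^ 2 ^ m = γ := gamma_Km hm β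
  have huKm : ∀ j : Fin (k-1), (u (j.1 + 2)) ^ 2 ^ m = u (j.1 + 2) := by
    intro j
    have := j.2
    exact huK (j.1 + 2) (by omega) (by omega)
  have hu1Km : (u 1) ^ 2 ^ m = u 1 := huK 1 le_rfl (by omega)
  -- main claim (part 2)
  have main : ∀ ω, walsh (2*m) (fun x => atr (2*m) (β * F x)) ω
      = 2 ^ m * chi (2*m)
          (nihoDual m γ ω
            + (nihoDual m γ (ω + β * u 1) + nihoDual m γ ω)
              * R (fun j => nihoDual m γ (ω + u (j.1 + 2)) + nihoDual m γ ω)) := by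
    intro ω
    set A : GF (2*m) → GF (2*m) := fun x => atr (2*m) (β * x ^ (2 ^ m + 1)) with hA
    set L : GF (2*m) → GF (2*m) := fun x => atr (2*m) (ω * x) with hL
    set Db : GF (2*m) := nihoDual m γ (ω + β * u 1) + nihoDual m γ ω with hDbdef
    set dd : Fin (k-1) → GF (2*m) :=
      fun j => nihoDual m γ (ω + u (j.1 + 2)) + nihoDual m γ ω with hdddef
    have hDb : Db = EE m γ ω (β * u 1) := EE_cancel γ ω (β * u 1)
    have hdd : ∀ j, dd j = EE m γ ω (u (j.1 + 2)) := fun j => EE_cancel γ ω (u (j.1 + 2))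
    have is01_Db : Is01 Db := hDb ▸ is01_EE hm hγKm ω (β * u 1)
    have is01_dd : ∀ j, Is01 (dd j) := fun j => (hdd j) ▸ is01_EE hm hγKm ω (u (j.1 + 2))
    have is01_ndω : Is01 (nihoDual m γ ω) := is01_nihoDual hm hγKm ω
    set W : ℤ := walsh (2*m) (fun x => atr (2*m) (β * F x)) ω with hWdef
    set uc : (Fin (k-1) → Bool) → GF (2*m) := fun c => ∑ j, bt (c j) * u (j.1 + 2) with hucdef
    set vv : (Fin (k-1) → Bool) → (Fin (k-1) → Bool) → GF (2*m) :=
      fun τ c => ω + R (fun j => bt (τ j)) * (β * u 1) + uc c with hvvdef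
    have hucKm : ∀ c, (uc c) ^ 2 ^ m = uc c := by
      intro c
      refine sum_Km _ _ fun j _ => ?_
      rw [mul_pow, huKm j]
      congr 1
      cases c j
      · show ((0:GF (2*m))) ^ 2 ^ m = 0
        exact zero_pow (by positivity : (2:ℕ)^m ≠ 0)
      · show ((1:GF (2*m))) ^ 2 ^ m = 1
        exact one_pow _
    have htr0 : ∀ c, trKm m (u 1 * uc c) = 0 := by
      intro c
      have h1 : u 1 * uc c = ∑ j, bt (c j) * (u 1 * u (j.1 + 2)) := by
        simp only [hucdef]
        rw [Finset.mul_sum]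
        exact Finset.sum_congr rfl fun j _ => by ring
      rw [h1, trKm_eq_trP, trP_sum]
      refine Finset.sum_eq_zero fun j _ => ?_
      rw [trP_smul01 m (is01_bt (c j)), ← trKm_eq_trP]
      have := j.2
      rw [hortho (j.1 + 2) (by omega) (by omega), mul_zero]
    -- step A : unfold walsh
    have hW : W = ∑ x : GF (2*m),
        chi (2*m) (A x + L x
          + atr (2*m) (R (fun j => atr (2*m) (u (j.1 + 2) * x)) * (β * (u 1 * x)))) := by
      rw [hWdef]
      unfold walsh
      refine Finset.sum_congr rfl fun x _ => ?_
      congr 1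
      show atr (2*m) (β * F x) + atr (2*m) (ω * x)
        = A x + L x + atr (2*m) (R (fun j => atr (2*m) (u (j.1 + 2) * x)) * (β * (u 1 * x)))
      rw [hF x]
      have h1 : β * (x ^ (2 ^ m + 1) + u 1 * x * R (fun j => atr (2*m) (u (j.1 + 2) * x)))
          = β * x ^ (2 ^ m + 1)
            + R (fun j => atr (2*m) (u (j.1 + 2) * x)) * (β * (u 1 * x)) := by ring
      rw [h1, atr_eq_trP, trP_add, ← atr_eq_trP, ← atr_eq_trP]
      show A x + atr (2*m) (R (fun j => atr (2*m) (u (j.1 + 2) * x)) * (β * (u 1 * x))) + L x = _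
      ring
    -- step B+C : pick and orthogonality, per x
    have hBC : (2:ℤ)^(k-1) * W = ∑ x : GF (2*m), ∑ τ : Fin (k-1) → Bool,
        (∑ c : Fin (k-1) → Bool,
          chi (2*m) (∑ j, bt (c j) * (atr (2*m) (u (j.1 + 2) * x) + bt (τ j))))
        * chi (2*m) (A x + L x
            + atr (2*m) (R (fun j => bt (τ j)) * (β * (u 1 * x)))) := by
      rw [hW, Finset.mul_sum]
      refine Finset.sum_congr rfl fun x _ => ?_
      have hpick := pick (N := 2*m) (k-1) (fun j => atr (2*m) (u (j.1 + 2) * x))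
        (fun j => is01_atr hm _)
        (fun w' => chi (2*m) (A x + L x + atr (2*m) (R w' * (β * (u 1 * x)))))
      rw [← hpick]
      refine Finset.sum_congr rfl fun τ _ => ?_
      congr 1
      rw [orth (k-1) (fun j => atr (2*m) (u (j.1 + 2) * x) + bt (τ j))
        (fun j => is01_add (is01_atr hm _) (is01_bt (τ j)))]
    -- step D: per-term rewrite of the inner x-sums
    have keyD : ∀ (τ c : Fin (k-1) → Bool) (x : GF (2*m)),
        chi (2*m) (∑ j, bt (c j) * (atr (2*m) (u (j.1 + 2) * x) + bt (τ j)))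
          * chi (2*m) (A x + L x + atr (2*m) (R (fun j => bt (τ j)) * (β * (u 1 * x))))
        = chi (2*m) (∑ j, bt (c j) * bt (τ j))
          * chi (2*m) (A x + atr (2*m) (vv τ c * x)) := by
      intro τ c x
      have hsplit : (∑ j, bt (c j) * (atr (2*m) (u (j.1 + 2) * x) + bt (τ j)))
          = atr (2*m) (uc c * x) + ∑ j, bt (c j) * bt (τ j) := by
        rw [Finset.sum_congr rfl (fun j _ => mul_add (bt (c j)) _ _),
          Finset.sum_add_distrib]
        congr 1
        rw [atr_eq_trP]
        have h1 : uc c * x = ∑ j, bt (c j) * (u (j.1 + 2) * x) := by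
          simp only [hucdef]
          rw [Finset.sum_mul]
          exact Finset.sum_congr rfl fun j _ => by ring
        rw [h1, trP_sum (2*m) Finset.univ (fun j => bt (c j) * (u (j.1 + 2) * x))]
        exact (Finset.sum_congr rfl fun j _ => by
          rw [trP_smul01 (2*m) (is01_bt (c j)), ← atr_eq_trP]).symm
      have is01P : Is01 (atr (2*m) (uc c * x)) := is01_atr hm _
      have is01Q : Is01 (∑ j, bt (N := 2*m) (c j) * bt (τ j)) :=
        is01_sum _ _ fun j _ => is01_bt_mul (c j) (is01_bt (τ j))
      have is01rest : Is01 (A x + L x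
          + atr (2*m) (R (fun j => bt (τ j)) * (β * (u 1 * x)))) :=
        is01_add (is01_add (is01_atr hm _) (is01_atr hm _)) (is01_atr hm _)
      rw [hsplit, chi_add is01P is01Q]
      have hcomb : chi (2*m) (atr (2*m) (uc c * x))
          * chi (2*m) (A x + L x + atr (2*m) (R (fun j => bt (τ j)) * (β * (u 1 * x))))
          = chi (2*m) (A x + atr (2*m) (vv τ c * x)) := by
        rw [← chi_add is01P is01rest]
        congr 1
        have hvx : atr (2*m) (vv τ c * x)
            = L x + atr (2*m) (R (fun j => bt (τ j)) * (β * (u 1 * x)))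
              + atr (2*m) (uc c * x) := by
          have h2 : vv τ c * x = ω * x
              + R (fun j => bt (τ j)) * (β * (u 1 * x)) + uc c * x := by
            simp only [hvvdef]; ring
          rw [h2, atr_eq_trP, trP_add, trP_add, ← atr_eq_trP, ← atr_eq_trP, ← atr_eq_trP]
        rw [hvx]
        ring
      calc chi (2*m) (atr (2*m) (uc c * x)) * chi (2*m) (∑ j, bt (c j) * bt (τ j))
            * chi (2*m) (A x + L x + atr (2*m) (R (fun j => bt (τ j)) * (β * (u 1 * x))))
          = chi (2*m) (∑ j, bt (c j) * bt (τ j))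
            * (chi (2*m) (atr (2*m) (uc c * x))
              * chi (2*m) (A x + L x + atr (2*m) (R (fun j => bt (τ j)) * (β * (u 1 * x))))) := by
            ring
        _ = _ := by rw [hcomb]
    -- step F : dual shift identity
    have keyF : ∀ (τ c : Fin (k-1) → Bool), nihoDual m γ (vv τ c)
        = nihoDual m γ ω + R (fun j => bt (τ j)) * Db + ∑ j, bt (c j) * dd j := by
      intro τ c
      have hEuc : EE m γ ω (uc c) = ∑ j, bt (c j) * dd j := by
        simp only [hucdef]
        rw [EE_sum γ ω _ _ (fun j _ => by
          rw [mul_pow, huKm j]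
          congr 1
          cases c j
          · exact zero_pow (by positivity : (2:ℕ)^m ≠ 0)
          · exact one_pow _)]
        exact Finset.sum_congr rfl fun j _ => by
          rw [EE_smul01 γ ω (is01_bt (c j)), hdd j]
      rcases hR (fun j => bt (τ j)) with h0 | h1
      · have hv : vv τ c = ω + uc c := by simp only [hvvdef, h0, zero_mul, add_zero]
        rw [hv, h0, zero_mul, add_zero, nihoDual_add, hEuc]
      · have hv : vv τ c = (ω + uc c) + β * u 1 := by simp only [hvvdef, h1, one_mul]; ring
        rw [hv, h1, one_mul, nihoDual_add, nihoDual_add, hEuc]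
        rw [EE_shift γ ω (β * u 1) (uc c)]
        have hcorr : trKm m (γ⁻¹ * (β * u 1 * (uc c) ^ 2 ^ m + (β * u 1) ^ 2 ^ m * uc c)) = 0 := by
          have h2 : γ⁻¹ * (β * u 1 * (uc c) ^ 2 ^ m + (β * u 1) ^ 2 ^ m * uc c)
              = u 1 * uc c := by
            rw [hucKm c, mul_pow, hu1Km, hγdef]
            rw [inv_mul_eq_iff_eq_mul₀ (gamma_ne_zero hβ)]
            ring
          rw [h2, htr0 c]
        rw [hDb, hcorr, add_zero]
        ring
    -- step G+E : evaluate inner x-sum via walshG and split chi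
    have keyE : ∀ (τ c : Fin (k-1) → Bool),
        (∑ x : GF (2*m), chi (2*m) (∑ j, bt (c j) * bt (τ j))
          * chi (2*m) (A x + atr (2*m) (vv τ c * x)))
        = (2^m * chi (2*m) (nihoDual m γ ω + R (fun j => bt (τ j)) * Db))
          * (chi (2*m) (∑ j, bt (c j) * bt (τ j))
            * chi (2*m) (∑ j, bt (c j) * dd j)) := by
      intro τ c
      rw [← Finset.mul_sum]
      have hws : (∑ x : GF (2*m), chi (2*m) (A x + atr (2*m) (vv τ c * x)))
          = 2^m * chi (2*m) (nihoDual m γ (vv τ c)) := by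
        rw [hA]
        exact walshG hm hβ (vv τ c)
      rw [hws, keyF τ c]
      have is01eps : Is01 (R (fun j => bt (τ j)) * Db) := by
        rcases hR (fun j => bt (τ j)) with h | h
        · rw [h, zero_mul]; exact Or.inl rfl
        · rw [h, one_mul]; exact is01_Db
      have is01sum : Is01 (∑ j, bt (c j) * dd j) :=
        is01_sum _ _ fun j _ => is01_bt_mul (c j) (is01_dd j)
      rw [chi_add (is01_add is01_ndω is01eps) is01sum]
      ring
    -- step H : second orthogonality
    have keyO2 : ∀ τ : Fin (k-1) → Bool,
        (∑ c : Fin (k-1) → Bool, chi (2*m) (∑ j, bt (c j) * bt (τ j))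
          * chi (2*m) (∑ j, bt (c j) * dd j))
        = if (∀ j, dd j + bt (τ j) = 0) then ((2:ℤ)^(k-1)) else 0 := by
      intro τ
      have h1 : ∀ c : Fin (k-1) → Bool,
          chi (2*m) (∑ j, bt (c j) * bt (τ j)) * chi (2*m) (∑ j, bt (c j) * dd j)
          = chi (2*m) (∑ j, bt (c j) * (dd j + bt (τ j))) := by
        intro c
        rw [← chi_add (is01_sum _ _ fun j _ => is01_bt_mul (c j) (is01_bt (τ j)))
          (is01_sum _ _ fun j _ => is01_bt_mul (c j) (is01_dd j))]
        congr 1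
        rw [← Finset.sum_add_distrib]
        exact Finset.sum_congr rfl fun j _ => by ring
      rw [Finset.sum_congr rfl fun c _ => h1 c]
      exact orth (k-1) (fun j => dd j + bt (τ j))
        (fun j => is01_add (is01_dd j) (is01_bt (τ j)))
    -- assemble
    have hfinal : (2:ℤ)^(k-1) * W
        = 2^m * ((2:ℤ)^(k-1) * chi (2*m) (nihoDual m γ ω + R dd * Db)) := by
      rw [hBC]
      rw [Finset.sum_comm]
      calc ∑ τ : Fin (k-1) → Bool, ∑ x : GF (2*m),
            (∑ c : Fin (k-1) → Bool,
              chi (2*m) (∑ j, bt (c j) * (atr (2*m) (u (j.1 + 2) * x) + bt (τ j))))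
            * chi (2*m) (A x + L x + atr (2*m) (R (fun j => bt (τ j)) * (β * (u 1 * x))))
          = ∑ τ : Fin (k-1) → Bool, ∑ c : Fin (k-1) → Bool, ∑ x : GF (2*m),
            chi (2*m) (∑ j, bt (c j) * (atr (2*m) (u (j.1 + 2) * x) + bt (τ j)))
            * chi (2*m) (A x + L x + atr (2*m) (R (fun j => bt (τ j)) * (β * (u 1 * x)))) := by
            refine Finset.sum_congr rfl fun τ _ => ?_
            rw [← Finset.sum_comm]
            exact Finset.sum_congr rfl fun x _ => Finset.sum_mul _ _ _
        _ = ∑ τ : Fin (k-1) → Bool, ∑ c : Fin (k-1) → Bool, ∑ x : GF (2*m),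
            chi (2*m) (∑ j, bt (c j) * bt (τ j))
            * chi (2*m) (A x + atr (2*m) (vv τ c * x)) := by
            refine Finset.sum_congr rfl fun τ _ => Finset.sum_congr rfl fun c _ =>
              Finset.sum_congr rfl fun x _ => keyD τ c x
        _ = ∑ τ : Fin (k-1) → Bool,
            (2^m * chi (2*m) (nihoDual m γ ω + R (fun j => bt (τ j)) * Db))
            * ∑ c : Fin (k-1) → Bool,
              (chi (2*m) (∑ j, bt (c j) * bt (τ j))
                * chi (2*m) (∑ j, bt (c j) * dd j)) := by
            refine Finset.sum_congr rfl fun τ _ => ?_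
            rw [Finset.mul_sum]
            exact Finset.sum_congr rfl fun c _ => keyE τ c
        _ = ∑ τ : Fin (k-1) → Bool,
            (if (∀ j, dd j + bt (τ j) = 0) then ((2:ℤ)^(k-1)) else 0)
            * chi (2*m) (nihoDual m γ ω + R (fun j => bt (τ j)) * Db) * 2^m := by
            refine Finset.sum_congr rfl fun τ _ => ?_
            rw [keyO2 τ]
            ring
        _ = 2^m * ((2:ℤ)^(k-1) * chi (2*m) (nihoDual m γ ω + R dd * Db)) := by
            rw [← Finset.sum_mul]
            rw [pick (k-1) dd is01_dd
              (fun w' => chi (2*m) (nihoDual m γ ω + R w' * Db))]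
            ring
    have h2r : ((2:ℤ)^(k-1)) ≠ 0 := by positivity
    have hW2 : W = 2^m * chi (2*m) (nihoDual m γ ω + R dd * Db) := by
      apply mul_left_cancel₀ h2r
      rw [hfinal]; ring
    exact hW2.trans (by rw [mul_comm (R dd) Db])
  refine ⟨?_, fun ω => by rw [main ω]⟩
  intro ω
  rw [main ω, mul_pow]
  rw [sq (chi (2*m) _), chi_mul_self, mul_one, ← pow_mul, mul_comm m 2]
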